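/- There exists exactly one λ ∈ ℝ satisfying the scalar linear complementarity relation: Σᵢ (φ(λ)ᵢ − aᵢ) ≥ 0, λmax − λ ≥ 0, and (Σᵢ (φ(λ)ᵢ − aᵢ))·(λmax − λ) = 0. -/

import Mathlib

/-- There exists exactly one `lam` satisfying the scalar linear complementarity relation
`∑ i, (φ lam i - a i) ≥ 0`, `lamMax - lam ≥ 0`, `(∑ i, (φ lam i - a i)) * (lamMax - lam) = 0`,
where `φ lam i = -(lam + c₀ i) / q i`. -/
theorem stmt_0 (N : ℕ) (hN : 0 < N) (q c₀ a : Fin N → ℝ) (hq : ∀ i, 0 < q i)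
    (lamMax : ℝ) (φ : ℝ → Fin N → ℝ)
    (hφ : ∀ lam i, φ lam i = -(lam + c₀ i) / q i) :
    ∃! lam : ℝ,
      0 ≤ ∑ i, (φ lam i - a i) ∧ 0 ≤ lamMax - lam ∧
        (∑ i, (φ lam i - a i)) * (lamMax - lam) = 0 := by
  set S : ℝ := ∑ i, 1 / q i with hS
  set K : ℝ := ∑ i, (-(c₀ i) / q i - a i) with hK
  have hSpos : 0 < S := by
    apply Finset.sum_pos
    · intro i _
      exact one_div_pos.mpr (hq i)
    · exact Finset.univ_nonempty_iff.mpr (Fin.pos_iff_nonempty.mp hN)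
  have hf : ∀ lam : ℝ, ∑ i, (φ lam i - a i) = K - lam * S := by
    intro lam
    rw [hK, hS, Finset.mul_sum, ← Finset.sum_sub_distrib]
    apply Finset.sum_congr rfl
    intro i _
    rw [hφ]
    have := (hq i).ne'
    field_simp
    ring
  set lam0 : ℝ := K / S with hlam0
  have hflam0 : K - lam0 * S = 0 := by
    rw [hlam0, div_mul_cancel₀ K hSpos.ne']; ring
  refine ⟨min lamMax lam0, ?_, ?_⟩
  · rcases le_or_gt lamMax lam0 with h | h
    · rw [min_eq_left h, hf]
      refine ⟨?_, by simp, by ring⟩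
      nlinarith
    · rw [min_eq_right h.le, hf, hflam0]
      exact ⟨le_refl 0, by linarith, by ring⟩
  · intro y ⟨h1, h2, h3⟩
    rw [hf] at h1 h3
    rcases mul_eq_zero.mp h3 with h | h
    · have hy : y = lam0 := by
        rw [hlam0, eq_div_iff hSpos.ne']
        linarith
      rw [hy]
      have : lam0 ≤ lamMax := by rw [← hy]; linarith
      exact (min_eq_right this).symm
    · have hy : y = lamMax := by linarith
      rw [hy]
      have : lamMax ≤ lam0 := by
        rw [hy] at h1
        rw [hlam0, le_div_iff₀ hSpos]
        nlinarith
      exact (min_eq_left this).symm
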